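/- Let (B, Θ) be a category with nullhomotopies and (T, F) a Θ-torsion theory. Then for an object X of B the following are equivalent: (a) X ∈ T ∩ F; (b) Θ(id_X) is a singleton; (c) X is Θ-trivial, i.e. Θ(id_X) ≠ ∅. -/
import Mathlib


open CategoryTheory

universe w v u

/-- A structure of nullhomotopies on a category `B`: a set of nullhomotopies on each arrow,
together with associative and unital pre- and post-composition actions. -/
structure NullStruct (B : Type u) [Category.{v} B] where
  null : ∀ {X Y : B}, (X ⟶ Y) → Type w
  pre : ∀ {W X Y : B} (f : W ⟶ X) {g : X ⟶ Y}, null g → null (f ≫ g)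
  post : ∀ {X Y Z : B} {g : X ⟶ Y} (h : Y ⟶ Z), null g → null (g ≫ h)
  pre_pre : ∀ {V W X Y : B} (f' : V ⟶ W) (f : W ⟶ X) {g : X ⟶ Y} (φ : null g),
    HEq (pre (f' ≫ f) φ) (pre f' (pre f φ))
  post_post : ∀ {X Y Z Z' : B} {g : X ⟶ Y} (h : Y ⟶ Z) (h' : Z ⟶ Z') (φ : null g),
    HEq (post (h ≫ h') φ) (post h' (post h φ))
  pre_post : ∀ {W X Y Z : B} (f : W ⟶ X) {g : X ⟶ Y} (h : Y ⟶ Z) (φ : null g),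
    HEq (pre f (post h φ)) (post h (pre f φ))
  pre_id : ∀ {X Y : B} {g : X ⟶ Y} (φ : null g), HEq (pre (𝟙 X) φ) φ
  post_id : ∀ {X Y : B} {g : X ⟶ Y} (φ : null g), HEq (post (𝟙 Y) φ) φ

variable {B : Type u} [Category.{v} B]

/-- `(N, n, ν)` is a homotopy kernel of `g` with respect to `Θ`. -/
def IsHKernel (Θ : NullStruct.{w} B) {N X Y : B} (g : X ⟶ Y) (n : N ⟶ X)
    (ν : Θ.null (n ≫ g)) : Prop :=
  ∀ {W : B} (f : W ⟶ X) (φ : Θ.null (f ≫ g)),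
    ∃! f' : W ⟶ N, f' ≫ n = f ∧ HEq (Θ.pre f' ν) φ

/-- `(Q, q, θ)` is a homotopy cokernel of `g` with respect to `Θ`. -/
def IsHCokernel (Θ : NullStruct.{w} B) {X Y Q : B} (g : X ⟶ Y) (q : Y ⟶ Q)
    (θ : Θ.null (g ≫ q)) : Prop :=
  ∀ {W : B} (h : Y ⟶ W) (ψ : Θ.null (g ≫ h)),
    ∃! h' : Q ⟶ W, q ≫ h' = h ∧ HEq (Θ.post h' θ) ψ

/-- `T` is `Θ`-orthogonal to `F`: each `Θ(h)` is a singleton for `h : T ⟶ F`. -/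
def NullOrth (Θ : NullStruct.{w} B) (T F : B) : Prop :=
  ∀ h : T ⟶ F, Nonempty (Θ.null h) ∧ Subsingleton (Θ.null h)

/-- A homotopy torsion theory with respect to a structure of nullhomotopies `Θ`. -/
structure HTorsionTheory (Θ : NullStruct.{w} B) where
  T : Set B
  F : Set B
  repleteT : ∀ {X Y : B}, (X ≅ Y) → X ∈ T → Y ∈ T
  repleteF : ∀ {X Y : B}, (X ≅ Y) → X ∈ F → Y ∈ F
  pres : ∀ X : B, ∃ (TX FX : B) (t : TX ⟶ X) (f : X ⟶ FX) (ξ : Θ.null (t ≫ f)),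
    TX ∈ T ∧ FX ∈ F ∧ IsHKernel Θ f t ξ ∧ IsHCokernel Θ t f ξ
  orth : ∀ {t f : B}, t ∈ T → f ∈ F → NullOrth Θ t f

lemma null_heq (Θ : NullStruct.{w} B) {X Y : B} {g g' : X ⟶ Y} (h : g = g')
    (hs : Subsingleton (Θ.null g')) (a : Θ.null g) (b : Θ.null g') : HEq a b := by
  subst h; exact heq_of_eq (Subsingleton.elim a b)

lemma mem_of_trivial {Θ : NullStruct.{w} B} (tt : HTorsionTheory Θ) (X : B)
    (φ : Θ.null (𝟙 X)) : X ∈ tt.T ∩ tt.F := by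
  obtain ⟨TX, FX, t, f, ξ, hT, hF, hk, hc⟩ := tt.pres X
  have hsub : Subsingleton (Θ.null (t ≫ f)) := (tt.orth hT hF (t ≫ f)).2
  -- torsion part
  obtain ⟨s, ⟨hs1, -⟩, -⟩ := hk (𝟙 X) (Θ.post f φ)
  obtain ⟨u, -, huniq⟩ := hk t ξ
  have h1 : 𝟙 TX = u := huniq (𝟙 TX) ⟨Category.id_comp t, Θ.pre_id ξ⟩
  have h2 : t ≫ s = u := huniq (t ≫ s)
    ⟨by rw [Category.assoc, hs1, Category.comp_id],
     null_heq Θ (by rw [Category.assoc, ← Category.assoc s, hs1, Category.id_comp]) hsub _ ξ⟩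
  have hts : t ≫ s = 𝟙 TX := h2.trans h1.symm
  -- torsion-free part
  obtain ⟨r, ⟨hr1, -⟩, -⟩ := hc (𝟙 X) (Θ.pre t φ)
  obtain ⟨v, -, hvuniq⟩ := hc f ξ
  have h3 : 𝟙 FX = v := hvuniq (𝟙 FX) ⟨Category.comp_id f, Θ.post_id ξ⟩
  have h4 : r ≫ f = v := hvuniq (r ≫ f)
    ⟨by rw [← Category.assoc, hr1, Category.id_comp],
     null_heq Θ (by rw [Category.assoc, ← Category.assoc f, hr1, Category.id_comp]) hsub _ ξ⟩
  have hrf : r ≫ f = 𝟙 FX := h4.trans h3.symm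
  exact ⟨tt.repleteT ⟨t, s, hts, hs1⟩ hT, tt.repleteF ⟨r, f, hrf, hr1⟩ hF⟩

/-- In a Θ-torsion theory, for an object `X` the following are equivalent:
(a) `X ∈ T ∩ F`; (b) `Θ(𝟙 X)` is a singleton; (c) `X` is Θ-trivial (`Θ(𝟙 X)` is nonempty). -/
theorem stmt19 {Θ : NullStruct.{w} B} (tt : HTorsionTheory Θ) (X : B) :
    (X ∈ tt.T ∩ tt.F ↔ (Nonempty (Θ.null (𝟙 X)) ∧ Subsingleton (Θ.null (𝟙 X)))) ∧
    ((Nonempty (Θ.null (𝟙 X)) ∧ Subsingleton (Θ.null (𝟙 X))) ↔ Nonempty (Θ.null (𝟙 X))) := by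
  constructor
  · constructor
    · rintro ⟨hT, hF⟩
      exact tt.orth hT hF (𝟙 X)
    · rintro ⟨⟨φ⟩, -⟩
      exact mem_of_trivial tt X φ
  · exact ⟨fun h => h.1, fun h => ⟨h, by
      obtain ⟨φ⟩ := h
      obtain ⟨hT, hF⟩ := mem_of_trivial tt X φ
      exact (tt.orth hT hF (𝟙 X)).2⟩⟩
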